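/- If M is a supplemented dual automorphism-invariant right R-module, then M satisfies the property (D3): whenever A and B are direct summands of M with A + B = M, the submodule A ∩ B is a direct summand of M. -/

import Mathlib

open LinearMap Submodule

/-- A submodule N of M is small (superfluous) in M:
N + K = M implies K = M for every submodule K. -/
def IsSmall {R : Type*} [Ring R] {M : Type*} [AddCommGroup M] [Module R M]
    (N : Submodule R M) : Prop :=
  ∀ K : Submodule R M, N ⊔ K = ⊤ → K = ⊤

/-- M is a dual automorphism-invariant R-module: for any two small submodules
K₁, K₂ of M, every surjective homomorphism η : M/K₁ → M/K₂ whose kernel is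
small in M/K₁ lifts to an endomorphism φ of M (i.e. π₂ ∘ φ = η ∘ π₁). -/
def IsDualAutoInv (R M : Type*) [Ring R] [AddCommGroup M] [Module R M] : Prop :=
  ∀ (K₁ K₂ : Submodule R M), IsSmall K₁ → IsSmall K₂ →
    ∀ η : (M ⧸ K₁) →ₗ[R] (M ⧸ K₂), Function.Surjective η →
      IsSmall (LinearMap.ker η) →
      ∃ φ : M →ₗ[R] M, K₂.mkQ ∘ₗ φ = η ∘ₗ K₁.mkQ

/-- M is supplemented: every submodule N of M has a supplement, i.e. a submodule K
minimal with respect to K + N = M. -/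
def IsSupplemented (R M : Type*) [Ring R] [AddCommGroup M] [Module R M] : Prop :=
  ∀ N : Submodule R M, ∃ K : Submodule R M,
    K ⊔ N = ⊤ ∧ ∀ K' : Submodule R M, K' ≤ K → K' ⊔ N = ⊤ → K' = K

section helpers
variable {R : Type*} [Ring R] {M : Type*} [AddCommGroup M] [Module R M]

theorem isSmall_bot : IsSmall (⊥ : Submodule R M) := by
  intro K hK; simpa using hK

theorem isSmall_of_le {N N' : Submodule R M} (h : N ≤ N') (h' : IsSmall N') : IsSmall N := by
  intro K hK
  apply h' K
  rw [eq_top_iff, ← hK]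
  exact sup_le_sup_right h K

/-- If `N` is small inside a submodule `K` (in the relative sense), it is small in `M`. -/
theorem isSmall_of_small_in {K N : Submodule R M} (hN : N ≤ K)
    (h : ∀ X ≤ K, N ⊔ X = K → X = K) : IsSmall N := by
  intro X hX
  have hmod : (N ⊔ X) ⊓ K = N ⊔ X ⊓ K := sup_inf_assoc_of_le X hN
  rw [hX, top_inf_eq] at hmod
  have hXK : X ⊓ K = K := h (X ⊓ K) inf_le_right hmod.symm
  have hKX : K ≤ X := by rw [← hXK]; exact inf_le_left
  rw [← hX, sup_eq_right.2 (hN.trans hKX)]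

/-- Surjective image of a small submodule is small. -/
theorem isSmall_map {M₂ : Type*} [AddCommGroup M₂] [Module R M₂] (f : M →ₗ[R] M₂)
    (hf : Function.Surjective f) {N : Submodule R M} (h : IsSmall N) :
    IsSmall (N.map f) := by
  intro X hX
  have h1 : N ⊔ X.comap f = ⊤ := by
    rw [eq_top_iff]
    intro m _
    have : f m ∈ N.map f ⊔ X := hX ▸ mem_top
    obtain ⟨y, hy⟩ := mem_sup.1 this
    obtain ⟨⟨n, hn, rfl⟩, x, hx, hxy⟩ := hy
    refine mem_sup.2 ⟨n, hn, m - n, ?_, by abel⟩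
    show f (m - n) ∈ X
    rw [map_sub, ← hxy]; simpa using hx
  have h2 := h _ h1
  rw [eq_top_iff]
  intro x _
  obtain ⟨m, rfl⟩ := hf x
  have : m ∈ X.comap f := h2 ▸ mem_top
  exact this

end helpers



section suppl
variable {R : Type*} [Ring R] {M : Type*} [AddCommGroup M] [Module R M]

/-- In a supplemented module, a submodule `N` of a direct summand `A` has a
supplement inside `A`. -/
theorem exists_supplement_in (hsupp : IsSupplemented R M) {A A' : Submodule R M}
    (hc : IsCompl A A') {N : Submodule R M} (hN : N ≤ A) :
    ∃ K : Submodule R M, K ≤ A ∧ K ⊔ N = A ∧ ∀ X ≤ K, X ⊔ N = A → X = K := by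
  classical
  set π : M →ₗ[R] M := A.subtype ∘ₗ linearProjOfIsCompl A A' hc with hπdef
  have hπa : ∀ a ∈ A, π a = a := by
    intro a ha
    show (A.subtype (linearProjOfIsCompl A A' hc a) : M) = a
    rw [show a = ((⟨a, ha⟩ : A) : M) from rfl, show linearProjOfIsCompl A A' hc = projectionOnto A A' hc from rfl, projectionOnto_apply_left hc]
    rfl
  have hπa' : ∀ x ∈ A', π x = 0 := by
    intro x hx
    show (A.subtype (linearProjOfIsCompl A A' hc x) : M) = 0
    rw [show linearProjOfIsCompl A A' hc = projectionOnto A A' hc from rfl, projectionOnto_apply_of_mem_right hc hx]; rfl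
  have hπmem : ∀ x : M, π x ∈ A := fun x => (linearProjOfIsCompl A A' hc x).2
  have hπker : ∀ x : M, π x = 0 → x ∈ A' := by
    intro x hx
    have h0 : linearProjOfIsCompl A A' hc x = 0 := by
      rwa [← Submodule.coe_eq_zero]
    exact (linearProjOfIsCompl_apply_eq_zero_iff hc).1 h0
  obtain ⟨L, hL1, hL2⟩ := hsupp (N ⊔ A')
  refine ⟨L.map π, ?_, ?_, ?_⟩
  · rintro x ⟨l, _, rfl⟩; exact hπmem l
  · apply le_antisymm
    · exact sup_le (by rintro x ⟨l, _, rfl⟩; exact hπmem l) hN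
    · intro a ha
      have : a ∈ L ⊔ (N ⊔ A') := by rw [hL1]; exact mem_top
      obtain ⟨l, hl, y, hy, hly⟩ := mem_sup.1 this
      obtain ⟨n, hn, x, hx, hnx⟩ := mem_sup.1 hy
      have h2 : π (l + (n + x)) = π l + n := by
        rw [map_add, map_add, hπa n (hN hn), hπa' x hx, add_zero]
      have h3 : a = π l + n := by rw [← h2, hnx, hly]; exact (hπa a ha).symm
      exact h3 ▸ mem_sup.2 ⟨π l, ⟨l, hl, rfl⟩, n, hn, rfl⟩
  · intro X hX hXN
    have hY : L ≤ (L ⊓ X.comap π) ⊔ (N ⊔ A') := by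
      intro l hl
      have hπl : π l ∈ X ⊔ N := by rw [hXN]; exact hπmem l
      obtain ⟨x, hx, n, hn, hxn⟩ := mem_sup.1 hπl
      obtain ⟨l', hl', rfl⟩ := hX hx
      refine mem_sup.2 ⟨l', ⟨hl', hx⟩, l - l', ?_, by abel⟩
      refine mem_sup.2 ⟨n, hn, l - l' - n, ?_, by abel⟩
      apply hπker
      rw [map_sub, map_sub, hπa n (hN hn), ← hxn]
      abel
    have hYtop : (L ⊓ X.comap π) ⊔ (N ⊔ A') = ⊤ := by
      rw [eq_top_iff, ← hL1]
      exact sup_le (hY.trans le_rfl) le_sup_right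
    have hYL := hL2 _ inf_le_left hYtop
    have : L ≤ X.comap π := by rw [← hYL]; exact inf_le_right
    apply le_antisymm hX
    rintro x ⟨l, hl, rfl⟩
    exact this hl

end suppl

theorem supplemented_dualAutoInv_D3'
    {R M : Type*} [Ring R] [AddCommGroup M] [Module R M]
    (hsupp : IsSupplemented R M)
    (hdai : ∀ (K₁ K₂ : Submodule R M), IsSmall K₁ → IsSmall K₂ →
      ∀ η : (M ⧸ K₁) →ₗ[R] (M ⧸ K₂), Function.Surjective η →
        IsSmall (LinearMap.ker η) →
        ∃ φ : M →ₗ[R] M, K₂.mkQ ∘ₗ φ = η ∘ₗ K₁.mkQ)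
    (A B : Submodule R M) (hA : ∃ A' : Submodule R M, IsCompl A A')
    (hB : ∃ B' : Submodule R M, IsCompl B B') (hAB : A ⊔ B = ⊤) :
    ∃ C : Submodule R M, IsCompl (A ⊓ B) C := by
  classical
  obtain ⟨A', hcA⟩ := hA
  obtain ⟨B', hcB⟩ := hB
  obtain ⟨K, hKA, hKN, hKmin⟩ := exists_supplement_in hsupp hcA (inf_le_left : A ⊓ B ≤ A)
  -- K ⊓ B is small in K (relative sense)
  have hsmK : ∀ X ≤ K, (K ⊓ B) ⊔ X = K → X = K := by
    intro X hXK hXs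
    apply hKmin X hXK
    apply le_antisymm
    · exact sup_le (hXK.trans hKA) inf_le_left
    · have h1 : K ≤ X ⊔ A ⊓ B := by
        rw [← hXs]
        exact sup_le ((le_inf ((inf_le_left : K ⊓ B ≤ K).trans hKA)
          (inf_le_right : K ⊓ B ≤ B)).trans le_sup_right) le_sup_left
      exact le_of_eq_of_le hKN.symm (sup_le h1 le_sup_right)
  have hsmall : IsSmall (K ⊓ B) := isSmall_of_small_in inf_le_left hsmK
  have hKB : K ⊔ B = ⊤ := by
    have h1 : (K ⊔ A ⊓ B) ⊔ B = K ⊔ B := by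
      rw [sup_assoc, sup_eq_right.2 (inf_le_right : A ⊓ B ≤ B)]
    rw [← h1, hKN, hAB]
  -- projections for B ⊕ B'
  set ρ : M →ₗ[R] B' := linearProjOfIsCompl B' B hcB.symm with hρdef
  have hρB : ∀ b ∈ B, ρ b = 0 := fun b hb => projectionOnto_apply_of_mem_right hcB.symm hb
  have hρB' : ∀ b' : B', ρ (b' : M) = b' := fun b' => linearProjOfIsCompl_apply_left hcB.symm b'
  have hρker : ∀ x : M, ρ x = 0 → x ∈ B :=
    fun x hx => (linearProjOfIsCompl_apply_eq_zero_iff hcB.symm).1 hx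
  set πB : M →ₗ[R] M := B.subtype ∘ₗ linearProjOfIsCompl B B' hcB with hπBdef
  have hπBb : ∀ b ∈ B, πB b = b := by
    intro b hb
    show (B.subtype (linearProjOfIsCompl B B' hcB b) : M) = b
    rw [show b = ((⟨b, hb⟩ : B) : M) from rfl, show linearProjOfIsCompl B B' hcB = projectionOnto B B' hcB from rfl, projectionOnto_apply_left hcB]
    rfl
  have hπBb' : ∀ b' : B', πB (b' : M) = 0 := by
    intro b'
    show (B.subtype (linearProjOfIsCompl B B' hcB b') : M) = 0
    rw [show linearProjOfIsCompl B B' hcB = projectionOnto B B' hcB from rfl, projectionOnto_apply_right hcB b']; rfl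
  have hπBmem : ∀ x : M, πB x ∈ B := fun x => (linearProjOfIsCompl B B' hcB x).2
  -- the small submodule K₂ and the epimorphism q : K → B'
  set K₂ : Submodule R M := K ⊓ B with hK₂def
  set q : K →ₗ[R] B' := ρ ∘ₗ K.subtype with hqdef
  have hqsurj : Function.Surjective q := by
    intro b'
    have : (b' : M) ∈ K ⊔ B := by rw [hKB]; exact mem_top
    obtain ⟨k, hk, b, hb, hkb⟩ := mem_sup.1 this
    refine ⟨⟨k, hk⟩, ?_⟩
    have : ρ (b' : M) = ρ k + ρ b := by rw [← map_add, hkb]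
    rw [hρB' b', hρB b hb, add_zero] at this
    exact this.symm
  -- the quotient maps
  have hK₂B : K₂ ≤ B := inf_le_right
  have hK₂K : K₂ ≤ K := inf_le_left
  set eb : M ⧸ K₂ →ₗ[R] B' := K₂.liftQ ρ (fun x hx => hρB x (hK₂B hx)) with hebdef
  have heb : ∀ x : M, eb (K₂.mkQ x) = ρ x := fun x => by
    rw [Submodule.mkQ_apply]; exact Submodule.liftQ_apply _ _ _
  have hkerq : LinearMap.ker q ≤ LinearMap.ker (K₂.mkQ ∘ₗ K.subtype) := by
    intro k hk
    have hkB : (k : M) ∈ B := hρker k hk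
    show K₂.mkQ (k : M) = 0
    rw [Submodule.mkQ_apply, Submodule.Quotient.mk_eq_zero]
    exact ⟨k.2, hkB⟩
  set ι : (K ⧸ LinearMap.ker q) →ₗ[R] M ⧸ K₂ :=
    (LinearMap.ker q).liftQ (K₂.mkQ ∘ₗ K.subtype) hkerq with hιdef
  have hι : ∀ k : K, ι (Submodule.Quotient.mk k) = K₂.mkQ (k : M) := fun k => by
    rw [Submodule.liftQ_apply]; rfl
  set E : (K ⧸ LinearMap.ker q) ≃ₗ[R] B' := q.quotKerEquivOfSurjective hqsurj with hEdef
  have hE : ∀ k : K, E (Submodule.Quotient.mk k) = q k := fun k => rfl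
  set β : B' →ₗ[R] M ⧸ K₂ := ι ∘ₗ (E.symm : B' →ₗ[R] K ⧸ LinearMap.ker q) with hβdef
  have hβ1 : ∀ b' : B', eb (β b') = b' := by
    intro b'
    have h1 : ∀ z : K ⧸ LinearMap.ker q, eb (ι z) = E z := by
      intro z
      obtain ⟨k, rfl⟩ := Submodule.Quotient.mk_surjective _ z
      rw [hι, hE, heb]; rfl
    show eb (ι (E.symm b')) = b'
    rw [h1, E.apply_symm_apply]
  have hβ2 : ∀ b' : B', β b' ∈ K.map K₂.mkQ := by
    intro b'
    show ι (E.symm b') ∈ K.map K₂.mkQ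
    obtain ⟨k, hk⟩ := Submodule.Quotient.mk_surjective _ (E.symm b')
    rw [← hk, hι]
    exact ⟨(k : M), k.2, rfl⟩
  -- the map α : M → M ⧸ K₂
  set α : M →ₗ[R] M ⧸ K₂ := K₂.mkQ ∘ₗ πB + β ∘ₗ ρ with hαdef
  have hα : ∀ x : M, α x = K₂.mkQ (πB x) + β (ρ x) := fun x => rfl
  have hαB : ∀ b ∈ B, α b = K₂.mkQ b := by
    intro b hb
    rw [hα, hπBb b hb, hρB b hb, map_zero, add_zero]
  have hαB' : ∀ b' : B', α (b' : M) = β b' := by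
    intro b'
    rw [hα, hπBb' b', hρB' b', map_zero, zero_add]
  have hkerα : ∀ x : M, α x = 0 → x ∈ K₂ := by
    intro x hx
    rw [hα] at hx
    have h1 : eb (K₂.mkQ (πB x)) + eb (β (ρ x)) = 0 := by rw [← map_add, hx, map_zero]
    rw [heb, hρB _ (hπBmem x), hβ1, zero_add] at h1
    have hxB : x ∈ B := hρker x h1
    rw [hπBb x hxB, hρB x hxB, map_zero, add_zero] at hx
    rwa [Submodule.mkQ_apply, Submodule.Quotient.mk_eq_zero] at hx
  have hαsurj : Function.Surjective α := by
    intro y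
    obtain ⟨m, rfl⟩ := Submodule.Quotient.mk_surjective _ y
    have hm : m ∈ K ⊔ B := by rw [hKB]; exact mem_top
    obtain ⟨k, hk, b, hb, hkb⟩ := mem_sup.1 hm
    obtain ⟨m₀, hm₀⟩ := Submodule.Quotient.mk_surjective K₂ (K₂.mkQ k - β (ρ k))
    have hm₀B : m₀ ∈ B := by
      apply hρker
      have h2 : eb (K₂.mkQ m₀) = 0 := by
        rw [Submodule.mkQ_apply, hm₀, map_sub, heb, hβ1, sub_self]
      rw [← heb]; exact h2
    refine ⟨m₀ + (ρ k : M) + b, ?_⟩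
    rw [map_add, map_add, hαB m₀ hm₀B, hαB' (ρ k), hαB b hb, Submodule.mkQ_apply, hm₀,
      sub_add_cancel, ← map_add, hkb, Submodule.mkQ_apply]
  -- lift α to the quotient by ⊥ and apply dual automorphism invariance
  set η : (M ⧸ (⊥ : Submodule R M)) →ₗ[R] M ⧸ K₂ := (⊥ : Submodule R M).liftQ α bot_le
    with hηdef
  have hη : ∀ m : M, η ((⊥ : Submodule R M).mkQ m) = α m := fun m => by
    rw [Submodule.mkQ_apply, Submodule.liftQ_apply]
  have hηsurj : Function.Surjective η := by
    intro y; obtain ⟨m, hm⟩ := hαsurj y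
    exact ⟨(⊥ : Submodule R M).mkQ m, by rw [hη, hm]⟩
  have hηker : IsSmall (LinearMap.ker η) := by
    apply isSmall_of_le (N' := K₂.map (⊥ : Submodule R M).mkQ)
    · intro z hz
      obtain ⟨m, rfl⟩ := Submodule.Quotient.mk_surjective _ z
      have hαm : α m = 0 := by
        rw [← hη m]; exact hz
      exact ⟨m, hkerα m hαm, rfl⟩
    · exact isSmall_map _ (Submodule.mkQ_surjective _) hsmall
  obtain ⟨φ, hφ⟩ := hdai ⊥ K₂ isSmall_bot hsmall η hηsurj hηker
  have hφ' : ∀ m : M, K₂.mkQ (φ m) = α m := by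
    intro m
    have h1 := LinearMap.congr_fun hφ m
    rw [LinearMap.comp_apply, LinearMap.comp_apply, hη] at h1
    exact h1
  -- properties of φ on B'
  have hφB' : ∀ b' : B', K₂.mkQ (φ (b' : M)) = β b' := fun b' => by rw [hφ', hαB']
  have hφK : ∀ b' : B', φ (b' : M) ∈ K := by
    intro b'
    obtain ⟨k, hkK, hkk⟩ := hβ2 b'
    have h1 : K₂.mkQ (φ (b' : M) - k) = 0 := by
      rw [map_sub, hφB', hkk, sub_self]
    have h2 : φ (b' : M) - k ∈ K₂ := by
      rwa [Submodule.mkQ_apply, Submodule.Quotient.mk_eq_zero] at h1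
    have h3 := add_mem (hK₂K h2) hkK
    simpa using h3
  have hφρ : ∀ b' : B', ρ (φ (b' : M)) = b' := by
    intro b'
    rw [← heb, hφB', hβ1]
  -- the complement
  set C : Submodule R M := LinearMap.range (φ ∘ₗ B'.subtype) with hCdef
  have hCK : C ≤ K := by rintro x ⟨b', rfl⟩; exact hφK b'
  refine ⟨C ⊔ A', ?_, ?_⟩
  · rw [Submodule.disjoint_def]
    intro x hxAB hxCA'
    obtain ⟨hxA, hxB⟩ := Submodule.mem_inf.1 hxAB
    obtain ⟨c, hc, a', ha', hca⟩ := mem_sup.1 hxCA'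
    obtain ⟨b', hb'⟩ := LinearMap.mem_range.1 hc
    have ha'A : a' ∈ A := by
      have : a' = x - c := by rw [← hca]; abel
      rw [this]
      exact sub_mem hxA (hKA (hCK hc))
    have ha'0 : a' = 0 := Submodule.disjoint_def.1 hcA.disjoint a' ha'A ha'
    have hxc : x = c := by rw [← hca, ha'0, add_zero]
    have hb'0 : (b' : M) = 0 := by
      have h1 : ρ x = 0 := hρB x hxB
      rw [hxc, ← hb'] at h1
      have h2 : (b' : B') = 0 := by
        rw [← hφρ b']
        exact h1
      rw [h2]; rfl
    rw [hxc, ← hb', LinearMap.comp_apply, Submodule.subtype_apply, hb'0, map_zero]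
  · rw [codisjoint_iff, eq_top_iff, ← codisjoint_iff.1 hcA.codisjoint]
    have hAle : A ≤ (A ⊓ B) ⊔ C := by
      intro a ha
      have h1 : a ∈ K ⊔ A ⊓ B := by rw [hKN]; exact ha
      obtain ⟨k, hkK, n, hn, hkn⟩ := mem_sup.1 h1
      have hcC : φ ((ρ k : M)) ∈ C := ⟨ρ k, rfl⟩
      have hkc : k - φ ((ρ k : M)) ∈ B := by
        apply hρker
        rw [map_sub, hφρ (ρ k), sub_self]
      have hkcA : k - φ ((ρ k : M)) ∈ A := sub_mem (hKA hkK) (hKA (hCK hcC))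
      refine mem_sup.2 ⟨(k - φ ((ρ k : M))) + n,
        add_mem (Submodule.mem_inf.2 ⟨hkcA, hkc⟩) hn, φ ((ρ k : M)), hcC, ?_⟩
      rw [← hkn]; abel
    exact sup_le (hAle.trans (sup_le_sup_left le_sup_left _))
      (le_sup_right.trans le_sup_right)

/-- A supplemented dual automorphism-invariant module satisfies (D3): if A and B are
direct summands of M with A + B = M, then A ∩ B is a direct summand of M. -/
theorem supplemented_dualAutoInv_D3
    {R M : Type*} [Ring R] [AddCommGroup M] [Module R M]
    (hsupp : IsSupplemented R M) (hdai : IsDualAutoInv R M)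
    (A B : Submodule R M) (hA : ∃ A' : Submodule R M, IsCompl A A')
    (hB : ∃ B' : Submodule R M, IsCompl B B') (hAB : A ⊔ B = ⊤) :
    ∃ C : Submodule R M, IsCompl (A ⊓ B) C := by
  exact supplemented_dualAutoInv_D3' hsupp hdai A B hA hB hAB
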